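/- Let f_1,…,f_m ∈ F_2[x_1,…,x_n] with 1 ∈ ⟨f_1,…,f_m, x_1^2-x_1,…,x_n^2-x_n⟩, and suppose the homogenized ideal I^(h) = ⟨f_1^(h),…,f_m^(h), x_1^2-x_1h,…,x_n^2-x_nh⟩ has degree of regularity D (i.e., every homogeneous polynomial of degree D lies in I^(h)). Then there exist polynomials h_1,…,h_m, g_1,…,g_n ∈ F_2[x_1,…,x_n] with deg(h_i f_i) ≤ D and deg(g_j (x_j^2-x_j)) ≤ D for all i, j such that 1 = ∑_{i=1}^m h_i f_i + ∑_{j=1}^n g_j (x_j^2 - x_j). -/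

import Mathlib

open MvPolynomial

/-- Homogenization of `f ∈ F_2[x_1,…,x_n]` with respect to a new variable `h`
(the last variable of `Fin (n+1)`). -/
noncomputable def homogenize {n : ℕ} (f : MvPolynomial (Fin n) (ZMod 2)) :
    MvPolynomial (Fin (n + 1)) (ZMod 2) :=
  f.support.sum fun a =>
    MvPolynomial.monomial
      (Finsupp.mapDomain (Fin.castSucc) a +
        Finsupp.single (Fin.last n) (f.totalDegree - a.sum fun _ k => k))
      (f.coeff a)

lemma hc_mul {σ R : Type*} [CommRing R] {q : MvPolynomial σ R} {d : ℕ}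
    (hq : q.IsHomogeneous d) (a : MvPolynomial σ R) (k : ℕ) :
    homogeneousComponent k (a * q) =
      if d ≤ k then homogeneousComponent (k - d) a * q else 0 := by
  conv_lhs => rw [← sum_homogeneousComponent a, Finset.sum_mul, map_sum]
  rw [Finset.sum_congr rfl fun i _ =>
    homogeneousComponent_of_mem
      (((homogeneousComponent_isHomogeneous i a).mul hq : _))]
  by_cases hdk : d ≤ k
  · rw [if_pos hdk]
    have : ∀ i, (k = i + d) ↔ (i = k - d) := by omega
    simp only [this]
    rw [Finset.sum_ite_eq' (Finset.range (a.totalDegree + 1)) (k - d)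
      (fun i => homogeneousComponent i a * q)]
    by_cases hmem : k - d ∈ Finset.range (a.totalDegree + 1)
    · rw [if_pos hmem]
    · rw [if_neg hmem, homogeneousComponent_eq_zero, zero_mul]
      simp only [Finset.mem_range] at hmem
      omega
  · rw [if_neg hdk]
    apply Finset.sum_eq_zero
    intro i _
    rw [if_neg (by omega)]



noncomputable def vmap {n : ℕ} : Fin (n+1) → MvPolynomial (Fin n) (ZMod 2) :=
  Fin.snoc (fun j => X j) 1

@[simp] lemma vmap_castSucc {n : ℕ} (j : Fin n) : vmap j.castSucc = X j := Fin.snoc_castSucc _ _ _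
@[simp] lemma vmap_last {n : ℕ} : vmap (Fin.last n) = (1 : MvPolynomial (Fin n) (ZMod 2)) := Fin.snoc_last _ _

noncomputable def dehom {n : ℕ} : MvPolynomial (Fin (n+1)) (ZMod 2) →ₐ[ZMod 2] MvPolynomial (Fin n) (ZMod 2) :=
  aeval vmap

lemma degree_mapDomain {n : ℕ} (a : Fin n →₀ ℕ) :
    (Finsupp.mapDomain (Fin.castSucc) a).degree = a.degree := by
  classical
  show (Finsupp.mapDomain Fin.castSucc a).sum (fun _ k => k) = a.sum (fun _ k => k)
  exact Finsupp.sum_mapDomain_index (fun _ => rfl) (fun _ _ _ => rfl)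

lemma degree_add' {σ : Type*} (u v : σ →₀ ℕ) : (u + v).degree = u.degree + v.degree := by
  classical
  rw [Finsupp.degree_eq_weight_one, map_add]

lemma degree_single' {σ : Type*} (x : σ) (k : ℕ) : (Finsupp.single x k).degree = k := by
  classical
  rw [Finsupp.degree_eq_weight_one, Finsupp.weight_apply, Finsupp.sum_single_index] <;> simp

lemma homogenize_isHomogeneous {n : ℕ} (f : MvPolynomial (Fin n) (ZMod 2)) :
    (homogenize f).IsHomogeneous f.totalDegree := by
  apply MvPolynomial.IsHomogeneous.sum
  intro a ha
  apply isHomogeneous_monomial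
  rw [degree_add', degree_mapDomain, degree_single']
  have h1 : a.degree ≤ f.totalDegree := by
    exact le_totalDegree ha
  have h2 : (a.sum fun _ k => k) = a.degree := rfl
  omega

lemma dehom_homogenize {n : ℕ} (f : MvPolynomial (Fin n) (ZMod 2)) :
    dehom (homogenize f) = f := by
  classical
  unfold dehom homogenize
  rw [map_sum]
  conv_rhs => rw [← support_sum_monomial_coeff f]
  apply Finset.sum_congr rfl
  intro a _
  rw [aeval_monomial, Finsupp.prod_add_index (fun _ _ => pow_zero _) (fun _ _ _ _ => pow_add _ _ _)]
  have h1 : ((Finsupp.single (Fin.last n) (f.totalDegree - a.sum fun _ k => k)).prod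
      fun i e => (vmap i) ^ e) = (1 : MvPolynomial (Fin n) (ZMod 2)) := by
    rw [Finsupp.prod_single_index (h := fun i e => vmap i ^ e) (pow_zero _), vmap_last, one_pow]
  rw [h1, mul_one, Finsupp.prod_mapDomain_index_inj (Fin.castSucc_injective n)]
  simp only [vmap_castSucc]
  rw [monomial_eq]
  rfl

set_option maxHeartbeats 1000000 in
lemma totalDegree_dehom_le {n : ℕ} (p : MvPolynomial (Fin (n+1)) (ZMod 2)) :
    (dehom p).totalDegree ≤ p.totalDegree := by
  classical
  have hp : dehom p = ∑ a ∈ p.support, dehom (monomial a (coeff a p)) := by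
    rw [← map_sum, support_sum_monomial_coeff]
  rw [hp]
  refine le_trans (totalDegree_finset_sum _ _) (Finset.sup_le fun a ha => ?_)
  rw [dehom, aeval_monomial]
  refine le_trans (totalDegree_mul _ _) ?_
  rw [MvPolynomial.algebraMap_eq, totalDegree_C (R := ZMod 2) ((coeff a p)), zero_add, Finsupp.prod]
  refine le_trans (totalDegree_finset_prod _ _) ?_
  calc ∑ i ∈ a.support, ((vmap i) ^ a i).totalDegree
      ≤ ∑ i ∈ a.support, a i := by
        refine Finset.sum_le_sum fun i _ => ?_
        refine le_trans (totalDegree_pow _ _) ?_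
        have hv : (vmap i : MvPolynomial (Fin n) (ZMod 2)).totalDegree ≤ 1 := by
          induction i using Fin.lastCases with
          | last => simp
          | cast j => simp [totalDegree_X]
        calc a i * _ ≤ a i * 1 := Nat.mul_le_mul_left _ hv
          _ = a i := mul_one _
    _ ≤ p.totalDegree := by simpa [Finsupp.sum] using le_totalDegree (p := p) ha

/-- If `1 ∈ ⟨f_1,…,f_m, x_j²−x_j⟩` and the homogenized ideal `I^(h)` has degree of
regularity `D` (every homogeneous polynomial of degree `D` lies in `I^(h)`), then there is a
certificate `1 = ∑ h_i f_i + ∑ g_j (x_j²−x_j)` with `deg(h_i f_i) ≤ D` and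
`deg(g_j(x_j²−x_j)) ≤ D`. -/
theorem degree_bounded_nullstellensatz_certificate (n m D : ℕ)
    (f : Fin m → MvPolynomial (Fin n) (ZMod 2))
    (hone : (1 : MvPolynomial (Fin n) (ZMod 2)) ∈
      Ideal.span ((Set.range f) ∪ (Set.range fun j : Fin n => (X j) ^ 2 - X j)))
    (hreg : ∀ p : MvPolynomial (Fin (n + 1)) (ZMod 2), p.IsHomogeneous D →
      p ∈ Ideal.span ((Set.range fun i => homogenize (f i)) ∪
        (Set.range fun j : Fin n =>
          (X j.castSucc : MvPolynomial (Fin (n + 1)) (ZMod 2)) ^ 2 -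
            X j.castSucc * X (Fin.last n)))) :
    ∃ (h : Fin m → MvPolynomial (Fin n) (ZMod 2))
      (g : Fin n → MvPolynomial (Fin n) (ZMod 2)),
      (∀ i, (h i * f i).totalDegree ≤ D) ∧
      (∀ j, (g j * ((X j) ^ 2 - X j)).totalDegree ≤ D) ∧
      (1 : MvPolynomial (Fin n) (ZMod 2)) =
        (∑ i, h i * f i) + ∑ j, g j * ((X j) ^ 2 - X j) := by
  classical
  set F : Fin m → MvPolynomial (Fin (n+1)) (ZMod 2) := fun i => homogenize (f i) with hF
  set G : Fin n → MvPolynomial (Fin (n+1)) (ZMod 2) := fun j =>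
    (X j.castSucc) ^ 2 - X j.castSucc * X (Fin.last n) with hGdef
  have hG : ∀ j, (G j).IsHomogeneous 2 := fun j =>
    (isHomogeneous_X_pow _ _).sub ((isHomogeneous_X _ _).mul (isHomogeneous_X _ _))
  have hp : ((X (Fin.last n) : MvPolynomial (Fin (n+1)) (ZMod 2)) ^ D).IsHomogeneous D :=
    isHomogeneous_X_pow _ _
  have hmem := hreg _ hp
  rw [Ideal.span_union, Submodule.mem_sup] at hmem
  obtain ⟨a, ha, b, hb, hab⟩ := hmem
  rw [Ideal.mem_span_range_iff_exists_fun] at ha hb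
  obtain ⟨c, hc⟩ := ha
  obtain ⟨e, he⟩ := hb
  have key : (X (Fin.last n) : MvPolynomial (Fin (n+1)) (ZMod 2)) ^ D =
      ∑ i, c i * F i + ∑ j, e j * G j := by rw [hc, he, hab]
  have key2 : (X (Fin.last n) : MvPolynomial (Fin (n+1)) (ZMod 2)) ^ D =
      ∑ i, (if (f i).totalDegree ≤ D then homogeneousComponent (D - (f i).totalDegree) (c i) else 0) * F i
      + ∑ j, (if 2 ≤ D then homogeneousComponent (D - 2) (e j) else 0) * G j := by
    have h0 := congrArg (homogeneousComponent D) key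
    rw [homogeneousComponent_of_mem ((mem_homogeneousSubmodule _ _).2 hp), if_pos rfl,
      map_add, map_sum, map_sum] at h0
    rw [h0]
    congr 1
    · refine Finset.sum_congr rfl fun i _ => ?_
      rw [hc_mul (homogenize_isHomogeneous (f i)) (c i) D]
      split_ifs with hd
      · rfl
      · rw [zero_mul]
    · refine Finset.sum_congr rfl fun j _ => ?_
      rw [hc_mul (hG j) (e j) D]
      split_ifs with hd
      · rfl
      · rw [zero_mul]
  refine ⟨fun i => dehom (if (f i).totalDegree ≤ D then homogeneousComponent (D - (f i).totalDegree) (c i) else 0),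
    fun j => dehom (if 2 ≤ D then homogeneousComponent (D - 2) (e j) else 0), ?_, ?_, ?_⟩
  · intro i
    by_cases hd : (f i).totalDegree ≤ D
    · simp only [if_pos hd]
      refine le_trans (totalDegree_mul _ _) ?_
      have h1 : (dehom (homogeneousComponent (D - (f i).totalDegree) (c i))).totalDegree
          ≤ D - (f i).totalDegree :=
        le_trans (totalDegree_dehom_le _) (homogeneousComponent_isHomogeneous _ _).totalDegree_le
      omega
    · simp only [if_neg hd, map_zero, zero_mul, totalDegree_zero]
      exact Nat.zero_le _
  · intro j
    by_cases hd : 2 ≤ D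
    · simp only [if_pos hd]
      refine le_trans (totalDegree_mul _ _) ?_
      have h1 : (dehom (homogeneousComponent (D - 2) (e j))).totalDegree ≤ D - 2 :=
        le_trans (totalDegree_dehom_le _) (homogeneousComponent_isHomogeneous _ _).totalDegree_le
      have h2 : ((X j : MvPolynomial (Fin n) (ZMod 2)) ^ 2 - X j).totalDegree ≤ 2 := by
        refine le_trans (totalDegree_sub _ _) ?_
        simp [totalDegree_X_pow, totalDegree_X]
      omega
    · simp only [if_neg hd, map_zero, zero_mul, totalDegree_zero]
      exact Nat.zero_le _
  · have h0 := congrArg (dehom (n := n)) key2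
    rw [map_pow, map_add, map_sum, map_sum] at h0
    have hX : dehom (X (Fin.last n) : MvPolynomial (Fin (n+1)) (ZMod 2)) = 1 := by
      rw [dehom, aeval_X, vmap_last]
    rw [hX, one_pow] at h0
    rw [h0]
    congr 1
    · refine Finset.sum_congr rfl fun i _ => ?_
      rw [map_mul, hF, dehom_homogenize]
    · refine Finset.sum_congr rfl fun j _ => ?_
      rw [map_mul, hGdef]
      congr 1
      rw [map_sub, map_mul, map_pow]
      have h1 : dehom (X (Fin.castSucc j) : MvPolynomial (Fin (n+1)) (ZMod 2)) = X j := by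
        rw [dehom, aeval_X, vmap_castSucc]
      rw [h1, hX, mul_one]
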